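/- Fix integers q > r ≥ 1 and a real number α ≥ 0. Suppose ε : ℕ → ℝ satisfies ε(N) → 0 as N → ∞, and f_{q,r}(N) ≥ N^{α − ε(N)} for all integers N ≥ 1. Then in fact f_{q,r}(N) ≥ N^α for all integers N ≥ 1. -/

import Mathlib

/-- A monotone path of length `ℓ` (number of vertices) in the `q`-edge-colored complete
graph on `[N]` given by `χ`, all of whose edge colors lie in `S`. -/
def HasMonoPath (q N : ℕ) (χ : Fin N → Fin N → Fin q) (S : Finset (Fin q)) (ℓ : ℕ) : Prop :=
  ∃ v : Fin ℓ → Fin N, StrictMono v ∧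
    ∀ i j : Fin ℓ, (i : ℕ) + 1 = (j : ℕ) → χ (v i) (v j) ∈ S

/-- The maximum length of a monotone path using at most `r` colors in the coloring `χ`. -/
noncomputable def maxMonoLen (q r N : ℕ) (χ : Fin N → Fin N → Fin q) : ℕ :=
  sSup {ℓ : ℕ | ∃ S : Finset (Fin q), S.card ≤ r ∧ HasMonoPath q N χ S ℓ}

/-- `fqr q r N` : the minimum over `q`-edge-colorings of the complete graph on `[N]` of the
maximum length of a monotone path using at most `r` colors. -/
noncomputable def fqr (q r N : ℕ) : ℕ :=
  sInf {L : ℕ | ∃ χ : Fin N → Fin N → Fin q, L = maxMonoLen q r N χ}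

namespace S12
open Finset

lemma monoPath_le {q N ℓ : ℕ} {χ : Fin N → Fin N → Fin q} {S : Finset (Fin q)}
    (h : HasMonoPath q N χ S ℓ) : ℓ ≤ N := by
  obtain ⟨v, hv, -⟩ := h
  simpa using Fintype.card_le_of_injective v hv.injective

lemma zero_mem {q r N : ℕ} {χ : Fin N → Fin N → Fin q} :
    0 ∈ {ℓ : ℕ | ∃ S : Finset (Fin q), S.card ≤ r ∧ HasMonoPath q N χ S ℓ} :=
  ⟨∅, by simp, Fin.elim0, fun i => i.elim0, fun i => i.elim0⟩

lemma le_maxMonoLen {q r N ℓ : ℕ} {χ : Fin N → Fin N → Fin q} {S : Finset (Fin q)}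
    (hS : S.card ≤ r) (h : HasMonoPath q N χ S ℓ) : ℓ ≤ maxMonoLen q r N χ :=
  le_csSup ⟨N, fun _ ⟨_, _, h'⟩ => monoPath_le h'⟩ ⟨S, hS, h⟩

lemma maxMonoLen_le {q r N B : ℕ} {χ : Fin N → Fin N → Fin q}
    (hb : ∀ ℓ (S : Finset (Fin q)), S.card ≤ r → HasMonoPath q N χ S ℓ → ℓ ≤ B) :
    maxMonoLen q r N χ ≤ B :=
  csSup_le ⟨0, zero_mem⟩ (fun _ ⟨S, hS, h⟩ => hb _ S hS h)

def pc (q M N : ℕ) (χ₁ : Fin M → Fin M → Fin q) (χ₂ : Fin N → Fin N → Fin q)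
    (x y : Fin (M * N)) : Fin q :=
  have hN : 0 < N := by
    rcases Nat.eq_zero_or_pos N with h | h
    · exact absurd x.isLt (by simp [h])
    · exact h
  if (x : ℕ) / N = (y : ℕ) / N then
    χ₂ ⟨(x : ℕ) % N, Nat.mod_lt _ hN⟩ ⟨(y : ℕ) % N, Nat.mod_lt _ hN⟩
  else
    χ₁ ⟨(x : ℕ) / N, (Nat.div_lt_iff_lt_mul hN).2 x.isLt⟩
       ⟨(y : ℕ) / N, (Nat.div_lt_iff_lt_mul hN).2 y.isLt⟩

lemma pc_eq {q M N : ℕ} (hN : 0 < N) (χ₁ : Fin M → Fin M → Fin q)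
    (χ₂ : Fin N → Fin N → Fin q) (x y : Fin (M * N)) (h : (x : ℕ) / N = (y : ℕ) / N) :
    pc q M N χ₁ χ₂ x y
      = χ₂ ⟨(x : ℕ) % N, Nat.mod_lt _ hN⟩ ⟨(y : ℕ) % N, Nat.mod_lt _ hN⟩ := by
  simp [pc, h]

lemma pc_ne {q M N : ℕ} (hN : 0 < N) (χ₁ : Fin M → Fin M → Fin q)
    (χ₂ : Fin N → Fin N → Fin q) (x y : Fin (M * N)) (h : ¬ (x : ℕ) / N = (y : ℕ) / N) :
    pc q M N χ₁ χ₂ x y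
      = χ₁ ⟨(x : ℕ) / N, (Nat.div_lt_iff_lt_mul hN).2 x.isLt⟩
          ⟨(y : ℕ) / N, (Nat.div_lt_iff_lt_mul hN).2 y.isLt⟩ := by
  simp [pc, h]

lemma pc_bound (q r M N : ℕ) (χ₁ : Fin M → Fin M → Fin q) (χ₂ : Fin N → Fin N → Fin q) :
    maxMonoLen q r (M * N) (pc q M N χ₁ χ₂) ≤ maxMonoLen q r M χ₁ * maxMonoLen q r N χ₂ := by
  apply maxMonoLen_le
  rintro ℓ S hS ⟨v, hv, he⟩
  rcases Nat.eq_zero_or_pos ℓ with hℓ | hℓ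
  · omega
  have hMN : 0 < M * N := lt_of_le_of_lt (Nat.zero_le _) (v ⟨0, hℓ⟩).isLt
  have hN : 0 < N := by
    rcases Nat.eq_zero_or_pos N with h | h
    · rw [h, Nat.mul_zero] at hMN; omega
    · exact h
  set L₁ := maxMonoLen q r M χ₁ with hL₁
  set L₂ := maxMonoLen q r N χ₂ with hL₂
  set a : Fin ℓ → ℕ := fun i => (v i : ℕ) / N with ha
  have amono : Monotone a := fun i j hij =>
    Nat.div_le_div_right (Nat.le_of_lt_succ (Nat.lt_succ_of_le (hv.monotone hij)))
  have haM : ∀ i, a i < M := fun i => (Nat.div_lt_iff_lt_mul hN).2 (v i).isLt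
  have hmod : ∀ i j : Fin ℓ, i < j → a i = a j → (v i : ℕ) % N < (v j : ℕ) % N := by
    intro i j hij hEq
    have h1 := Nat.div_add_mod (v i : ℕ) N
    have h2 := Nat.div_add_mod (v j : ℕ) N
    have h3 : (v i : ℕ) < (v j : ℕ) := hv hij
    have hEq' : (v i : ℕ) / N = (v j : ℕ) / N := hEq
    rw [← h1, ← h2, hEq'] at h3
    exact Nat.lt_of_add_lt_add_left h3
  -- fiber bound
  have fiber : ∀ i j : Fin ℓ, i ≤ j → a i = a j → (j : ℕ) - i + 1 ≤ L₂ := by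
    intro i j hij hae
    have hijn : (i : ℕ) ≤ (j : ℕ) := hij
    have hconst : ∀ t (ht : (i : ℕ) + t < ℓ), t ≤ (j : ℕ) - i → a ⟨(i : ℕ) + t, ht⟩ = a i := by
      intro t ht htj
      have h1 : a i ≤ a ⟨(i : ℕ) + t, ht⟩ := amono (by simp [Fin.le_def])
      have h2 : a ⟨(i : ℕ) + t, ht⟩ ≤ a j := amono (by simp [Fin.le_def]; omega)
      omega
    refine le_maxMonoLen hS ?_
    have hidx : ∀ t : Fin ((j : ℕ) - i + 1), (i : ℕ) + (t : ℕ) < ℓ := by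
      intro t
      have := t.isLt
      have := j.isLt
      omega
    refine ⟨fun t => ⟨(v ⟨(i : ℕ) + (t : ℕ), hidx t⟩ : ℕ) % N, Nat.mod_lt _ hN⟩, ?_, ?_⟩
    · intro t t' htt'
      have h0 : (⟨(i : ℕ) + (t : ℕ), hidx t⟩ : Fin ℓ) < ⟨(i : ℕ) + (t' : ℕ), hidx t'⟩ := by
        have := Fin.lt_def.1 htt'
        exact Fin.mk_lt_mk.2 (by omega)
      have hEq : a ⟨(i : ℕ) + (t : ℕ), hidx t⟩ = a ⟨(i : ℕ) + (t' : ℕ), hidx t'⟩ := by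
        rw [hconst _ _ (by have := t.isLt; omega), hconst _ _ (by have := t'.isLt; omega)]
      exact Fin.mk_lt_mk.2 (hmod _ _ h0 hEq)
    · intro t t' htt'
      have hEq : a ⟨(i : ℕ) + (t : ℕ), hidx t⟩ = a ⟨(i : ℕ) + (t' : ℕ), hidx t'⟩ := by
        rw [hconst _ _ (by have := t.isLt; omega), hconst _ _ (by have := t'.isLt; omega)]
      have hpc := he ⟨(i : ℕ) + (t : ℕ), hidx t⟩ ⟨(i : ℕ) + (t' : ℕ), hidx t'⟩ (by simp; omega)
      rwa [pc_eq hN _ _ _ _ hEq] at hpc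
  -- block bound
  set T : Finset ℕ := Finset.image a Finset.univ with hT
  have hTcard : T.card ≤ L₁ := by
    have hTne : T.Nonempty := ⟨a ⟨0, hℓ⟩, mem_image_of_mem _ (mem_univ _)⟩
    have hmemM : ∀ c ∈ T, c < M := by
      intro c hc
      obtain ⟨i, -, rfl⟩ := mem_image.1 hc
      exact haM i
    set iso := T.orderIsoOfFin (rfl : T.card = T.card) with hiso
    refine le_maxMonoLen hS ⟨fun t => ⟨((iso t : ℕ)), hmemM _ (iso t).2⟩, ?_, ?_⟩
    · intro t t' htt'
      exact Fin.mk_lt_mk.2 (Subtype.coe_lt_coe.2 (iso.lt_iff_lt.2 htt'))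
    · intro t t' htt'
      set c := (iso t : ℕ) with hc
      set c' := (iso t' : ℕ) with hc'
      have hcc : c < c' := Subtype.coe_lt_coe.2 (iso.lt_iff_lt.2 (by
        rw [Fin.lt_def]; omega))
      set F : Finset (Fin ℓ) := Finset.univ.filter (fun i => a i = c) with hF
      have hFne : F.Nonempty := by
        have hcT : c ∈ T := (iso t).2
        obtain ⟨i, -, hi⟩ := mem_image.1 hcT
        exact ⟨i, by simp [hF, hi]⟩
      set i := F.max' hFne with hi
      have hai : a i = c := (mem_filter.1 (F.max'_mem hFne)).2
      have hc'T : c' ∈ T := (iso t').2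
      obtain ⟨j, -, haj⟩ := mem_image.1 hc'T
      have hij : i < j := by
        by_contra hle
        push_neg at hle
        have := amono hle
        omega
      have hlt : (i : ℕ) + 1 < ℓ := by
        have h1 := j.isLt
        have h2 : (i : ℕ) < (j : ℕ) := hij
        omega
      set i' : Fin ℓ := ⟨(i : ℕ) + 1, hlt⟩ with hi'
      have hii' : i < i' := by simp [Fin.lt_def, hi']
      have h1 : c < a i' := by
        have hne : a i' ≠ c := by
          intro hEq
          have hmem : i' ∈ F := by simp [hF, hEq]
          have hle := F.le_max' _ hmem
          rw [← hi] at hle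
          exact absurd hii' (not_lt.2 hle)
        have := amono hii'.le
        omega
      have h2 : a i' ≤ c' := by
        have hle : i' ≤ j := by
          rw [Fin.le_def]
          have : (i : ℕ) < (j : ℕ) := hij
          simp [hi']; omega
        have := amono hle
        omega
      have hmem : a i' ∈ T := mem_image_of_mem _ (mem_univ _)
      have hval : a i' = c' := by
        set s := iso.symm ⟨a i', hmem⟩ with hs
        have hss : (iso s : ℕ) = a i' := by simp [hs]
        have hts : t < s := by
          rw [← iso.lt_iff_lt]
          rw [← Subtype.coe_lt_coe, hss]
          exact h1
        have hst : s ≤ t' := by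
          rw [← iso.le_iff_le]
          rw [← Subtype.coe_le_coe, hss]
          exact h2
        have : s = t' := by
          rw [Fin.lt_def] at hts
          rw [Fin.le_def] at hst
          exact Fin.ext (by omega)
        rw [← hss, this]
      have hne2 : ¬ (v i : ℕ) / N = (v i' : ℕ) / N := by
        have e1 : (v i : ℕ) / N = a i := rfl
        have e2 : (v i' : ℕ) / N = a i' := rfl
        rw [e1, e2, hai, hval]
        omega
      have hpc := he i i' (by simp [hi'])
      rw [pc_ne hN _ _ _ _ hne2] at hpc
      have g1 : (⟨(v i : ℕ) / N, (Nat.div_lt_iff_lt_mul hN).2 (v i).isLt⟩ : Fin M)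
          = ⟨c, hmemM _ (iso t).2⟩ := Fin.ext hai
      have g2 : (⟨(v i' : ℕ) / N, (Nat.div_lt_iff_lt_mul hN).2 (v i').isLt⟩ : Fin M)
          = ⟨c', hmemM _ (iso t').2⟩ := Fin.ext hval
      rwa [g1, g2] at hpc
  -- combine
  have key : ℓ ≤ T.card * L₂ := by
    have hcard : ℓ = (Finset.univ : Finset (Fin ℓ)).card := by simp
    rw [hcard,
      Finset.card_eq_sum_card_fiberwise (f := a) (t := T)
        (fun x _ => mem_image_of_mem a (mem_univ x))]
    have hbd : ∀ c ∈ T, (Finset.univ.filter (fun i => a i = c)).card ≤ L₂ := by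
      intro c hc
      set F := Finset.univ.filter (fun i => a i = c) with hF
      have hFne : F.Nonempty := by
        obtain ⟨i, -, hi⟩ := mem_image.1 hc
        exact ⟨i, by simp [hF, hi]⟩
      set i₀ := F.min' hFne with hi₀
      set j₀ := F.max' hFne with hj₀
      have hsub : F ⊆ Finset.Icc i₀ j₀ :=
        fun x hx => mem_Icc.2 ⟨F.min'_le x hx, F.le_max' x hx⟩
      have hai₀ : a i₀ = c := (mem_filter.1 (F.min'_mem hFne)).2
      have haj₀ : a j₀ = c := (mem_filter.1 (F.max'_mem hFne)).2
      have h01 : i₀ ≤ j₀ := F.min'_le _ (F.max'_mem hFne)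
      have h01n : (i₀ : ℕ) ≤ (j₀ : ℕ) := h01
      calc F.card ≤ (Finset.Icc i₀ j₀).card := card_le_card hsub
        _ = (j₀ : ℕ) + 1 - (i₀ : ℕ) := by rw [Fin.card_Icc]
        _ = (j₀ : ℕ) - (i₀ : ℕ) + 1 := by omega
        _ ≤ L₂ := fiber i₀ j₀ h01 (by rw [hai₀, haj₀])
    simpa using Finset.sum_le_card_nsmul T _ L₂ hbd
  exact key.trans (Nat.mul_le_mul_right _ hTcard)


lemma one_le_maxMonoLen {q r N : ℕ} (hN : 1 ≤ N) (χ : Fin N → Fin N → Fin q) :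
    1 ≤ maxMonoLen q r N χ := by
  apply le_maxMonoLen (S := ∅) (by simp)
  exact ⟨fun _ => ⟨0, hN⟩, fun i j hij => absurd (Fin.lt_iff_val_lt_val.1 hij) (by omega),
    fun i j hij => by omega⟩

lemma fqr_exists {q r N : ℕ} (hq : 0 < q) :
    ∃ χ : Fin N → Fin N → Fin q, fqr q r N = maxMonoLen q r N χ := by
  have hne : {L : ℕ | ∃ χ : Fin N → Fin N → Fin q, L = maxMonoLen q r N χ}.Nonempty :=
    ⟨maxMonoLen q r N (fun _ _ => ⟨0, hq⟩), ⟨fun _ _ => ⟨0, hq⟩, rfl⟩⟩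
  exact Nat.sInf_mem hne

lemma fqr_le {q r N : ℕ} (χ : Fin N → Fin N → Fin q) : fqr q r N ≤ maxMonoLen q r N χ :=
  Nat.sInf_le ⟨χ, rfl⟩

lemma one_le_fqr {q r N : ℕ} (hq : 0 < q) (hN : 1 ≤ N) : 1 ≤ fqr q r N := by
  obtain ⟨χ, hχ⟩ := fqr_exists (r := r) (N := N) hq
  rw [hχ]; exact one_le_maxMonoLen hN χ

lemma fqr_one {q r : ℕ} (hq : 0 < q) : fqr q r 1 = 1 := by
  refine le_antisymm ?_ (one_le_fqr hq le_rfl)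
  calc fqr q r 1 ≤ maxMonoLen q r 1 (fun _ _ => ⟨0, hq⟩) := fqr_le _
    _ ≤ 1 := maxMonoLen_le (fun _ _ _ h => monoPath_le h)

lemma fqr_mul {q r : ℕ} (hq : 0 < q) (M N : ℕ) :
    fqr q r (M * N) ≤ fqr q r M * fqr q r N := by
  obtain ⟨χ₁, h₁⟩ := fqr_exists (r := r) (N := M) hq
  obtain ⟨χ₂, h₂⟩ := fqr_exists (r := r) (N := N) hq
  calc fqr q r (M * N) ≤ maxMonoLen q r (M * N) (pc q M N χ₁ χ₂) := fqr_le _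
    _ ≤ maxMonoLen q r M χ₁ * maxMonoLen q r N χ₂ := pc_bound q r M N χ₁ χ₂
    _ = fqr q r M * fqr q r N := by rw [h₁, h₂]

lemma fqr_pow {q r : ℕ} (hq : 0 < q) (N k : ℕ) :
    fqr q r (N ^ k) ≤ fqr q r N ^ k := by
  induction k with
  | zero => simp [fqr_one hq]
  | succ k ih =>
    calc fqr q r (N ^ (k + 1)) = fqr q r (N ^ k * N) := by rw [pow_succ]
      _ ≤ fqr q r (N ^ k) * fqr q r N := fqr_mul hq _ _
      _ ≤ fqr q r N ^ k * fqr q r N := Nat.mul_le_mul_right _ ih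
      _ = fqr q r N ^ (k + 1) := (pow_succ _ _).symm

end S12

open Filter in
/-- Fix integers `q > r ≥ 1` and a real `α ≥ 0`. If `ε(N) → 0` and
`f_{q,r}(N) ≥ N^{α - ε(N)}` for all `N ≥ 1`, then `f_{q,r}(N) ≥ N^α` for all `N ≥ 1`. -/
theorem stmt_12 (q r : ℕ) (hr : 1 ≤ r) (hq : r < q) (α : ℝ) (hα : 0 ≤ α)
    (ε : ℕ → ℝ) (hε : Tendsto ε atTop (nhds 0))
    (h : ∀ N : ℕ, 1 ≤ N → (N : ℝ) ^ (α - ε N) ≤ (fqr q r N : ℝ)) :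
    ∀ N : ℕ, 1 ≤ N → (N : ℝ) ^ α ≤ (fqr q r N : ℝ) := by
  intro N hN
  have hq0 : 0 < q := lt_of_le_of_lt (Nat.zero_le r) hq
  rcases eq_or_lt_of_le hN with hN1 | hN2
  · rw [← hN1]
    have h1 : (1 : ℝ) ≤ (fqr q r 1 : ℝ) := by
      exact_mod_cast S12.one_le_fqr hq0 le_rfl
    simpa [Real.one_rpow] using h1
  · have hNR : (1 : ℝ) < (N : ℝ) := by exact_mod_cast hN2
    have hNpos : (0 : ℝ) < (N : ℝ) := by positivity
    have key : ∀ k : ℕ, 1 ≤ k → (N : ℝ) ^ (α - ε (N ^ k)) ≤ (fqr q r N : ℝ) := by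
      intro k hk
      have hk0 : (k : ℝ) ≠ 0 := Nat.cast_ne_zero.2 (by omega)
      have hkpos : (0 : ℝ) < (k : ℝ) := by positivity
      have hNk : 1 ≤ N ^ k := Nat.one_le_pow k N (by omega)
      have h2 := h (N ^ k) hNk
      have h3 : ((fqr q r (N ^ k) : ℕ) : ℝ) ≤ ((fqr q r N : ℕ) : ℝ) ^ k := by
        exact_mod_cast S12.fqr_pow hq0 N k
      have h4 : ((N : ℝ) ^ (k : ℕ)) ^ (α - ε (N ^ k)) ≤ ((fqr q r N : ℕ) : ℝ) ^ k := by
        calc ((N : ℝ) ^ (k : ℕ)) ^ (α - ε (N ^ k))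
            = ((N ^ k : ℕ) : ℝ) ^ (α - ε (N ^ k)) := by push_cast; ring_nf
          _ ≤ _ := h2.trans h3
      have h5 : (N : ℝ) ^ ((k : ℝ) * (α - ε (N ^ k))) ≤ ((fqr q r N : ℕ) : ℝ) ^ (k : ℕ) := by
        rw [Real.rpow_mul (le_of_lt hNpos), Real.rpow_natCast]
        exact h4
      have hf0 : (0 : ℝ) ≤ ((fqr q r N : ℕ) : ℝ) := by positivity
      have h6 := Real.rpow_le_rpow (Real.rpow_nonneg (le_of_lt hNpos) _) h5
        (by positivity : (0 : ℝ) ≤ 1 / (k : ℝ))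
      rw [← Real.rpow_natCast ((fqr q r N : ℕ) : ℝ) k, ← Real.rpow_mul (le_of_lt hNpos),
        ← Real.rpow_mul hf0] at h6
      have e1 : (k : ℝ) * (α - ε (N ^ k)) * (1 / (k : ℝ)) = α - ε (N ^ k) := by
        field_simp
      have e2 : (k : ℝ) * (1 / (k : ℝ)) = 1 := by field_simp
      rw [e1, e2, Real.rpow_one] at h6
      exact h6
    have htop : Tendsto (fun k => N ^ k) atTop atTop :=
      tendsto_pow_atTop_atTop_of_one_lt hN2
    have hε2 : Tendsto (fun k => ε (N ^ k)) atTop (nhds 0) := hε.comp htop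
    have hexp : Tendsto (fun k => α - ε (N ^ k)) atTop (nhds α) := by
      simpa using tendsto_const_nhds.sub hε2
    have hcont : ContinuousAt (fun x : ℝ => (N : ℝ) ^ x) α :=
      Real.continuousAt_const_rpow (ne_of_gt hNpos)
    have hlim : Tendsto (fun k => (N : ℝ) ^ (α - ε (N ^ k))) atTop (nhds ((N : ℝ) ^ α)) :=
      hcont.tendsto.comp hexp
    exact le_of_tendsto hlim (eventually_atTop.2 ⟨1, key⟩)
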